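/- Let θ ≥ 3 be an integer. For t ∈ (1/θ, 1) define R_1(t) = 2θ(θ−1) · ( t·log t + (1−t)·log((1−t)/(θ−1)) + log θ ) / (θt − 1)². Then R_1(t) ≥ 2((θ−1)/(θ−2))·log(θ−1) for every t ∈ (1/θ, 1), with equality if and only if t = (θ−1)/θ. In particular inf_{t ∈ (1/θ,1)} R_1(t) = 2((θ−1)/(θ−2))·log(θ−1). -/

import Mathlib

/-- `R_1(t) = 2θ(θ−1)·(t·log t + (1−t)·log((1−t)/(θ−1)) + log θ)/(θt − 1)²`. -/
noncomputable def Rone (θ : ℕ) (t : ℝ) : ℝ :=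
  2 * (θ : ℝ) * ((θ : ℝ) - 1) *
    (t * Real.log t + (1 - t) * Real.log ((1 - t) / ((θ : ℝ) - 1)) + Real.log (θ : ℝ)) /
    ((θ : ℝ) * t - 1) ^ 2

open Real Set

open Real Set

lemma aux1 (x : ℝ) (hx : 2 ≤ x) : 2 * Real.log x < x - 1/x := by
  have key : MonotoneOn (fun y : ℝ => y - y⁻¹ - 2 * Real.log y) (Set.Ici 2) := by
    have hd : ∀ y ∈ Set.Ioi (2:ℝ), HasDerivAt (fun y : ℝ => y - y⁻¹ - 2 * Real.log y)
        (1 - (-(y^2)⁻¹) - 2 * y⁻¹) y := by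
      intro y hy
      have hy0 : y ≠ 0 := by have : (2:ℝ) < y := hy; linarith
      exact ((hasDerivAt_id y).sub (hasDerivAt_inv hy0)).sub
        ((Real.hasDerivAt_log hy0).const_mul 2)
    apply monotoneOn_of_deriv_nonneg (convex_Ici 2)
    · intro y hy
      have hy0 : (0:ℝ) < y := by have : (2:ℝ) ≤ y := hy; linarith
      exact ContinuousAt.continuousWithinAt (by
        have := ((hasDerivAt_id y).sub (hasDerivAt_inv hy0.ne')).sub
          ((Real.hasDerivAt_log hy0.ne').const_mul 2)
        exact this.continuousAt)
    · intro y hy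
      rw [interior_Ici] at hy
      exact ((hd y hy).differentiableAt.differentiableWithinAt)
    · intro y hy
      rw [interior_Ici] at hy
      rw [(hd y hy).deriv]
      have hy2 : (2:ℝ) < y := hy
      have : (0:ℝ) < y := by linarith
      rw [show (1 - (-(y^2)⁻¹) - 2 * y⁻¹) = (y-1)^2/y^2  by field_simp; ring]
      positivity
  have h2 : (fun y : ℝ => y - y⁻¹ - 2 * Real.log y) 2 ≤ (fun y : ℝ => y - y⁻¹ - 2 * Real.log y) x :=
    key (Set.self_mem_Ici) hx hx
  simp only at h2
  have hl2 : Real.log 2 < 0.6931471808 := Real.log_two_lt_d9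
  have : (1:ℝ)/x = x⁻¹ := one_div x
  norm_num at h2
  linarith [h2]

lemma aux2 (x : ℝ) (hx : 2 ≤ x) : 2 - 4/(x+1) < Real.log x := by
  have key : MonotoneOn (fun y : ℝ => Real.log y - 2 + 4 * (y+1)⁻¹) (Set.Ici 2) := by
    have hd : ∀ y ∈ Set.Ioi (2:ℝ), HasDerivAt (fun y : ℝ => Real.log y - 2 + 4 * (y+1)⁻¹)
        (y⁻¹ + 4 * (-(((y+1)^2)⁻¹) * 1)) y := by
      intro y hy
      have hy0 : y ≠ 0 := by have : (2:ℝ) < y := hy; linarith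
      have hy1 : y + 1 ≠ 0 := by have : (2:ℝ) < y := hy; linarith
      have hinv : HasDerivAt (fun y : ℝ => (y+1)⁻¹) (-(((y+1)^2)⁻¹) * 1) y :=
        (hasDerivAt_inv hy1).comp y ((hasDerivAt_id y).add_const 1)
      exact ((Real.hasDerivAt_log hy0).sub_const 2).add (hinv.const_mul 4)
    apply monotoneOn_of_deriv_nonneg (convex_Ici 2)
    · intro y hy
      have hy0 : (0:ℝ) < y := by have : (2:ℝ) ≤ y := hy; linarith
      have hy1 : y + 1 ≠ 0 := by linarith
      have hinv : HasDerivAt (fun y : ℝ => (y+1)⁻¹) (-(((y+1)^2)⁻¹) * 1) y :=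
        (hasDerivAt_inv hy1).comp y ((hasDerivAt_id y).add_const 1)
      exact (((Real.hasDerivAt_log hy0.ne').sub_const 2).add (hinv.const_mul 4)).continuousAt.continuousWithinAt
    · intro y hy
      rw [interior_Ici] at hy
      exact (hd y hy).differentiableAt.differentiableWithinAt
    · intro y hy
      rw [interior_Ici] at hy
      rw [(hd y hy).deriv]
      have hy2 : (2:ℝ) < y := hy
      have h0 : (0:ℝ) < y := by linarith
      have h1 : (0:ℝ) < y + 1 := by linarith
      rw [show (y⁻¹ + 4 * (-(((y+1)^2)⁻¹) * 1)) = (y-1)^2/(y*(y+1)^2) by field_simp; ring]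
      positivity
  have h2 : (fun y : ℝ => Real.log y - 2 + 4 * (y+1)⁻¹) 2 ≤ (fun y : ℝ => Real.log y - 2 + 4 * (y+1)⁻¹) x :=
    key (Set.self_mem_Ici) hx hx
  simp only at h2
  have hl2 : (0.6931471803:ℝ) < Real.log 2 := Real.log_two_gt_d9
  have hx1 : (0:ℝ) < x + 1 := by linarith
  have e1 : (4:ℝ)/(x+1) = 4 * (x+1)⁻¹ := by rw [div_eq_mul_inv]
  norm_num at h2
  nlinarith [h2]


noncomputable def hFun (T : ℝ) : ℝ → ℝ := fun t =>
  Real.log t - Real.log (1-t) + Real.log (T-1) - (2*Real.log (T-1)/(T-2))*(T*t-1)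

noncomputable def gFun (T : ℝ) : ℝ → ℝ := fun t =>
  T*(t*Real.log t + (1-t)*Real.log ((1-t)/(T-1)) + Real.log T)
    - Real.log (T-1)/(T-2)*(T*t-1)^2

lemma hFun_deriv (T : ℝ) (hT : 3 ≤ T) {t : ℝ} (h0 : 0 < t) (h1 : t < 1) :
    HasDerivAt (hFun T) (1/t + 1/(1-t) - 2*Real.log (T-1)*T/(T-2)) t := by
  have h1t : (0:ℝ) < 1 - t := by linarith
  have hT2 : T - 2 ≠ 0 := by linarith
  have d1 : HasDerivAt (fun t : ℝ => Real.log (1-t)) ((0-1)/(1-t)) t :=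
    (((hasDerivAt_const t (1:ℝ)).sub (hasDerivAt_id t))).log h1t.ne'
  have d2 : HasDerivAt (fun t : ℝ => (2*Real.log (T-1)/(T-2))*(T*t-1))
      ((2*Real.log (T-1)/(T-2))*T) t := by
    have : HasDerivAt (fun t : ℝ => T*t-1) T t := by
      simpa using ((hasDerivAt_id t).const_mul T).sub_const 1
    exact this.const_mul _
  have := (((Real.hasDerivAt_log h0.ne').sub d1).add_const (Real.log (T-1))).sub d2
  have h' : HasDerivAt (hFun T) _ t := this
  convert h' using 1
  field_simp
  ring

lemma gFun_deriv (T : ℝ) (hT : 3 ≤ T) {t : ℝ} (h0 : 0 < t) (h1 : t < 1) :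
    HasDerivAt (gFun T) (T * hFun T t) t := by
  have h1t : (0:ℝ) < 1 - t := by linarith
  have hT1 : (0:ℝ) < T - 1 := by linarith
  have hT2 : T - 2 ≠ 0 := by linarith
  have du : HasDerivAt (fun t : ℝ => (1-t)/(T-1)) ((0-1)/(T-1)) t :=
    ((hasDerivAt_const t (1:ℝ)).sub (hasDerivAt_id t)).div_const (T-1)
  have hu : (1-t)/(T-1) ≠ 0 := by positivity
  have d1 : HasDerivAt (fun t : ℝ => t * Real.log t) (1 * Real.log t + t * t⁻¹) t :=
    (hasDerivAt_id t).mul (Real.hasDerivAt_log h0.ne')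
  have d2 : HasDerivAt (fun t : ℝ => (1-t) * Real.log ((1-t)/(T-1)))
      ((0-1) * Real.log ((1-t)/(T-1)) + (1-t) * (((0-1)/(T-1))/((1-t)/(T-1)))) t :=
    ((hasDerivAt_const t (1:ℝ)).sub (hasDerivAt_id t)).mul (du.log hu)
  have d3 : HasDerivAt (fun t : ℝ => (T*t-1)^2) (2*(T*t-1)*T) t := by
    have hb : HasDerivAt (fun t : ℝ => T*t-1) T t := by
      simpa using ((hasDerivAt_id t).const_mul T).sub_const 1
    simpa [mul_comm] using hb.fun_pow 2
  have := (((d1.add d2).add_const (Real.log T)).const_mul T).sub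
    (d3.const_mul (Real.log (T-1)/(T-2)))
  have h' : HasDerivAt (gFun T) _ t := this
  convert h' using 1
  unfold hFun
  rw [Real.log_div h1t.ne' hT1.ne']
  field_simp
  ring

lemma hFun_a (T : ℝ) (hT : 3 ≤ T) : hFun T (1/T) = 0 := by
  have hT0 : (0:ℝ) < T := by linarith
  have hT1 : (0:ℝ) < T - 1 := by linarith
  have h1 : (1:ℝ) - 1/T = (T-1)/T := by field_simp
  have h2 : T * (1/T) - 1 = 0 := by field_simp; ring
  unfold hFun
  rw [h1, h2, Real.log_div hT1.ne' hT0.ne', one_div, Real.log_inv]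
  ring

lemma hFun_b (T : ℝ) (hT : 3 ≤ T) : hFun T ((T-1)/T) = 0 := by
  have hT0 : (0:ℝ) < T := by linarith
  have hT1 : (0:ℝ) < T - 1 := by linarith
  have hT2 : T - 2 ≠ 0 := by linarith
  have h1 : (1:ℝ) - (T-1)/T = 1/T := by field_simp; ring
  have h2 : T * ((T-1)/T) - 1 = T - 2 := by field_simp; ring
  unfold hFun
  rw [h1, h2, Real.log_div hT1.ne' hT0.ne', one_div, Real.log_inv]
  field_simp
  ring

lemma gFun_a (T : ℝ) (hT : 3 ≤ T) : gFun T (1/T) = 0 := by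
  have hT0 : (0:ℝ) < T := by linarith
  have hT1 : (0:ℝ) < T - 1 := by linarith
  have h1 : (1:ℝ) - 1/T = (T-1)/T := by field_simp
  have h2 : T * (1/T) - 1 = 0 := by field_simp; ring
  have h3 : ((T-1)/T)/(T-1) = 1/T := by field_simp
  unfold gFun
  rw [h1, h2, h3, one_div, Real.log_inv]
  field_simp
  ring

lemma gFun_b (T : ℝ) (hT : 3 ≤ T) : gFun T ((T-1)/T) = 0 := by
  have hT0 : (0:ℝ) < T := by linarith
  have hT1 : (0:ℝ) < T - 1 := by linarith
  have hT2 : T - 2 ≠ 0 := by linarith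
  have h1 : (1:ℝ) - (T-1)/T = 1/T := by field_simp; ring
  have h2 : T * ((T-1)/T) - 1 = T - 2 := by field_simp; ring
  have h3 : (1/T)/(T-1) = (T*(T-1))⁻¹ := by field_simp
  unfold gFun
  rw [h1, h2, h3, Real.log_div hT1.ne' hT0.ne', Real.log_inv,
    Real.log_mul hT0.ne' hT1.ne']
  field_simp
  ring

set_option maxHeartbeats 2000000 in
lemma master (T : ℝ) (hT : 3 ≤ T) {t : ℝ} (hat : 1/T < t) (ht1 : t < 1) :
    0 ≤ gFun T t ∧ (gFun T t = 0 ↔ t = (T-1)/T) := by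
  have hT0 : (0:ℝ) < T := by linarith
  have hT1 : (1:ℝ) < T - 1 := by linarith
  have hT2 : (0:ℝ) < T - 2 := by linarith
  set L := Real.log (T-1) with hLdef
  have hL : 0 < L := Real.log_pos hT1
  set K := 2*L*T/(T-2) with hKdef
  set a := 1/T with hadef
  set b := (T-1)/T with hbdef
  have ha0 : 0 < a := by positivity
  have hab : a < b := by
    rw [hadef, hbdef, div_lt_div_iff₀ hT0 hT0]; nlinarith
  have hb1 : b < 1 := by
    rw [hbdef, div_lt_one hT0]; linarith
  have ha3 : a ≤ 1/3 := by
    rw [hadef]; apply div_le_div_of_nonneg_left <;> linarith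
  have hb23 : 2/3 ≤ b := by
    rw [hbdef, le_div_iff₀ hT0]; nlinarith
  -- K > 4
  have hK4 : 4 < K := by
    have h1 := aux2 (T-1) (by linarith)
    rw [show T - 1 + 1 = T by ring] at h1
    rw [hKdef, lt_div_iff₀ hT2]
    have h2 : (2 - 4/T)*T < L*T := by
      apply mul_lt_mul_of_pos_right h1 hT0
    have h3 : (2 - 4/T)*T = 2*T - 4 := by field_simp
    nlinarith
  have hK0 : 0 < K := by linarith
  -- K * a(1-a) < 1
  have hKa : K * (a*(1-a)) < 1 := by
    have h1 := aux1 (T-1) (by linarith)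
    have h2 : 2*L*(T-1) < (T-1)^2 - 1 := by
      have := mul_lt_mul_of_pos_right h1 (by linarith : (0:ℝ) < T-1)
      have e : (T - 1 - 1/(T-1))*(T-1) = (T-1)^2 - 1 := by field_simp
      nlinarith
    have e2 : K * (a*(1-a)) = (2*L*(T-1))/(T*(T-2)) := by
      rw [hKdef, hadef]; field_simp
    rw [e2, div_lt_one (by positivity)]
    nlinarith
  -- discriminant
  set D := Real.sqrt (1 - 4/K) with hDdef
  have hD2 : D^2 = 1 - 4/K := Real.sq_sqrt (by rw [sub_nonneg, div_le_one hK0]; linarith)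
  have hD0 : 0 < D := Real.sqrt_pos.mpr (by rw [sub_pos, div_lt_one hK0]; linarith)
  have hD1 : D < 1 := by nlinarith [div_pos (by norm_num : (0:ℝ)<4) hK0]
  set α := (1-D)/2 with hαdef
  set β := (1+D)/2 with hβdef
  have hsum : α + β = 1 := by rw [hαdef, hβdef]; ring
  have hprod : K * (α*β) = 1 := by
    have e : α*β = (1-D^2)/4 := by rw [hαdef, hβdef]; ring
    rw [e, hD2]
    field_simp
    ring
  have hα0 : 0 < α := by rw [hαdef]; linarith
  have hαh : α < 1/2 := by rw [hαdef]; linarith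
  have hβh : 1/2 < β := by rw [hβdef]; linarith
  have hβ1 : β < 1 := by rw [hβdef]; linarith
  have hb' : b = 1 - a := by rw [hadef, hbdef]; field_simp
  clear_value L K a b D α β
  have haα : a < α := by
    by_contra hc
    push_neg at hc  -- α ≤ a
    have h1 : α*(1-α) ≤ a*(1-a) := by
      nlinarith [mul_nonneg (sub_nonneg.mpr hc) (by linarith : (0:ℝ) ≤ 1 - a - α)]
    have h2 : K*(α*(1-α)) ≤ K*(a*(1-a)) := mul_le_mul_of_nonneg_left h1 hK0.le
    have h3 : K*(α*(1-α)) = 1 := by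
      have : 1 - α = β := by linarith
      rw [this]; exact hprod
    linarith
  have hβb : β < b := by
    have hq : β = 1 - α := by linarith
    rw [hq, hb']; linarith
  -- sign of h'
  have hsign : ∀ u : ℝ, 0 < u → u < 1 →
      1/u + 1/(1-u) - 2*L*T/(T-2) = K*((u-α)*(u-β))/(u*(1-u)) := by
    intro u h0 h1
    have e : K*((u-α)*(u-β)) = 1 - K*(u*(1-u)) := by
      linear_combination (-(K*u))*hsum + hprod
    have hu0 : u ≠ 0 := ne_of_gt h0
    have h1u : (1:ℝ) - u ≠ 0 := by intro hq; rw [sub_eq_zero] at hq; exact absurd hq.symm (ne_of_lt h1)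
    rw [e, ← hKdef, eq_div_iff (mul_ne_zero hu0 h1u)]
    field_simp
    ring
  have hderiv_pos_lo : ∀ u : ℝ, 0 < u → u < α → 0 < 1/u + 1/(1-u) - 2*L*T/(T-2) := by
    intro u h0 hu
    have h1 : u < 1 := by linarith
    rw [hsign u h0 h1]
    have : 0 < (u-α)*(u-β) := mul_pos_of_neg_of_neg (by linarith) (by linarith)
    apply div_pos (by nlinarith) (by nlinarith)
  have hderiv_neg : ∀ u : ℝ, α < u → u < β → 1/u + 1/(1-u) - 2*L*T/(T-2) < 0 := by
    intro u hu1 hu2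
    have h0 : 0 < u := by linarith
    have h1 : u < 1 := by linarith
    rw [hsign u h0 h1]
    have : (u-α)*(u-β) < 0 := mul_neg_of_pos_of_neg (by linarith) (by linarith)
    apply div_neg_of_neg_of_pos (by nlinarith) (by nlinarith)
  have hderiv_pos_hi : ∀ u : ℝ, β < u → u < 1 → 0 < 1/u + 1/(1-u) - 2*L*T/(T-2) := by
    intro u hu h1
    have h0 : 0 < u := by linarith
    rw [hsign u h0 h1]
    have : 0 < (u-α)*(u-β) := mul_pos (by linarith) (by linarith)
    apply div_pos (by nlinarith) (by nlinarith)
  -- continuity of hFun on subsets of (0,1)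
  have hcont : ∀ s : Set ℝ, s ⊆ Ioo 0 1 → ContinuousOn (hFun T) s := by
    intro s hs u hu
    exact ((hFun_deriv T hT (hs hu).1 (hs hu).2).continuousAt).continuousWithinAt
  have gcont : ∀ s : Set ℝ, s ⊆ Ioo 0 1 → ContinuousOn (gFun T) s := by
    intro s hs u hu
    exact ((gFun_deriv T hT (hs hu).1 (hs hu).2).continuousAt).continuousWithinAt
  -- monotonicity of hFun
  have SM1 : StrictMonoOn (hFun T) (Icc a α) := by
    apply strictMonoOn_of_deriv_pos (convex_Icc a α)
    · exact hcont _ (fun u hu => ⟨lt_of_lt_of_le ha0 hu.1, by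
        have := hu.2; linarith⟩)
    · intro u hu
      rw [interior_Icc] at hu
      rw [(hFun_deriv T hT (by linarith [hu.1] : (0:ℝ) < u) (by linarith [hu.2] : u < 1)).deriv, ← hLdef]
      exact hderiv_pos_lo u (by linarith [hu.1]) hu.2
  have SA : StrictAntiOn (hFun T) (Icc α β) := by
    apply strictAntiOn_of_deriv_neg (convex_Icc α β)
    · exact hcont _ (fun u hu => ⟨lt_of_lt_of_le hα0 hu.1, lt_of_le_of_lt hu.2 hβ1⟩)
    · intro u hu
      rw [interior_Icc] at hu
      rw [(hFun_deriv T hT (by linarith [hu.1] : (0:ℝ) < u) (by linarith [hu.2] : u < 1)).deriv, ← hLdef]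
      exact hderiv_neg u hu.1 hu.2
  have SM2 : StrictMonoOn (hFun T) (Icc β b) := by
    apply strictMonoOn_of_deriv_pos (convex_Icc β b)
    · exact hcont _ (fun u hu => ⟨by linarith [hu.1], lt_of_le_of_lt hu.2 hb1⟩)
    · intro u hu
      rw [interior_Icc] at hu
      rw [(hFun_deriv T hT (by linarith [hu.1] : (0:ℝ) < u) (by linarith [hu.2, hb1] : u < 1)).deriv, ← hLdef]
      exact hderiv_pos_hi u hu.1 (by linarith [hu.2])
  have SM3 : StrictMonoOn (hFun T) (Ico b 1) := by
    apply strictMonoOn_of_deriv_pos (convex_Ico b 1)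
    · exact hcont _ (fun u hu => ⟨by linarith [hu.1], hu.2⟩)
    · intro u hu
      rw [interior_Ico] at hu
      rw [(hFun_deriv T hT (by linarith [hu.1] : (0:ℝ) < u) hu.2).deriv, ← hLdef]
      exact hderiv_pos_hi u (by linarith [hu.1]) hu.2
  -- values
  have hha : hFun T a = 0 := by rw [hadef]; exact hFun_a T hT
  have hhb : hFun T b = 0 := by rw [hbdef]; exact hFun_b T hT
  have hga : gFun T a = 0 := by rw [hadef]; exact gFun_a T hT
  have hgb : gFun T b = 0 := by rw [hbdef]; exact gFun_b T hT
  -- h α > 0, h β < 0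
  have hhα : 0 < hFun T α := by
    have := SM1 (left_mem_Icc.mpr haα.le) (right_mem_Icc.mpr haα.le) haα
    rwa [hha] at this
  have hhβ : hFun T β < 0 := by
    have := SM2 (left_mem_Icc.mpr hβb.le) (right_mem_Icc.mpr hβb.le) hβb
    rwa [hhb] at this
  -- crossing point s
  obtain ⟨s, hs_mem, hs0⟩ : ∃ s ∈ Ioo α β, hFun T s = 0 := by
    have hsub := intermediate_value_Ioo' (le_of_lt (by linarith : α < β))
      (hcont _ (fun u hu => ⟨lt_of_lt_of_le hα0 hu.1, lt_of_le_of_lt hu.2 hβ1⟩))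
    have h0mem : (0:ℝ) ∈ Ioo (hFun T β) (hFun T α) := ⟨hhβ, hhα⟩
    obtain ⟨s, hs1, hs2⟩ := hsub h0mem
    exact ⟨s, hs1, hs2⟩
  have hαs : α < s := hs_mem.1
  have hsβ : s < β := hs_mem.2
  -- sign of h
  have hpos : ∀ u : ℝ, a < u → u < s → 0 < hFun T u := by
    intro u hu1 hu2
    rcases le_or_gt u α with hc | hc
    · have := SM1 ⟨le_rfl, haα.le⟩ ⟨hu1.le, hc⟩ hu1
      rwa [hha] at this
    · have := SA ⟨hc.le, by linarith⟩ ⟨hαs.le, hsβ.le⟩ hu2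
      rwa [hs0] at this
  have hneg : ∀ u : ℝ, s < u → u < b → hFun T u < 0 := by
    intro u hu1 hu2
    rcases le_or_gt u β with hc | hc
    · have := SA ⟨hαs.le, hsβ.le⟩ ⟨by linarith, hc⟩ hu1
      rwa [hs0] at this
    · have := SM2 ⟨hc.le, hu2.le⟩ ⟨hβb.le, le_rfl⟩ hu2
      rwa [hhb] at this
  have hpos2 : ∀ u : ℝ, b < u → u < 1 → 0 < hFun T u := by
    intro u hu1 hu2
    have := SM3 ⟨le_rfl, hb1⟩ ⟨hu1.le, hu2⟩ hu1
    rwa [hhb] at this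
  -- monotonicity of gFun
  have GM1 : StrictMonoOn (gFun T) (Icc a s) := by
    apply strictMonoOn_of_deriv_pos (convex_Icc a s)
    · exact gcont _ (fun u hu => ⟨lt_of_lt_of_le ha0 hu.1, by
        have := hu.2; have : u ≤ s := this; linarith⟩)
    · intro u hu
      rw [interior_Icc] at hu
      have h0u : (0:ℝ) < u := lt_trans ha0 hu.1
      have hu1 : u < 1 := by linarith [hu.2]
      rw [(gFun_deriv T hT h0u hu1).deriv]
      exact mul_pos hT0 (hpos u hu.1 hu.2)
  have GA : StrictAntiOn (gFun T) (Icc s b) := by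
    apply strictAntiOn_of_deriv_neg (convex_Icc s b)
    · exact gcont _ (fun u hu => ⟨by
        have := hu.1; linarith [hα0, hαs], lt_of_le_of_lt hu.2 hb1⟩)
    · intro u hu
      rw [interior_Icc] at hu
      have h0u : (0:ℝ) < u := by linarith [hu.1]
      have hu1 : u < 1 := by linarith [hu.2]
      rw [(gFun_deriv T hT h0u hu1).deriv]
      exact mul_neg_of_pos_of_neg hT0 (hneg u hu.1 hu.2)
  have GM2 : StrictMonoOn (gFun T) (Ico b 1) := by
    apply strictMonoOn_of_deriv_pos (convex_Ico b 1)
    · exact gcont _ (fun u hu => ⟨by linarith [hu.1], hu.2⟩)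
    · intro u hu
      rw [interior_Ico] at hu
      have h0u : (0:ℝ) < u := by linarith [hu.1]
      rw [(gFun_deriv T hT h0u hu.2).deriv]
      exact mul_pos hT0 (hpos2 u hu.1 hu.2)
  -- conclusion
  have key : t ≠ b → 0 < gFun T t := by
    intro hne
    rcases le_or_gt t s with hc | hc
    · have := GM1 ⟨le_rfl, by linarith⟩ ⟨hat.le, hc⟩ hat
      rwa [hga] at this
    · rcases lt_trichotomy t b with hc2 | hc2 | hc2
      · have := GA ⟨hc.le, hc2.le⟩ ⟨by linarith, le_rfl⟩ hc2
        rwa [hgb] at this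
      · exact absurd hc2 hne
      · have := GM2 ⟨le_rfl, hb1⟩ ⟨hc2.le, ht1⟩ hc2
        rwa [hgb] at this
  constructor
  · rcases eq_or_ne t b with he | he
    · rw [he, hgb]
    · exact (key he).le
  · constructor
    · intro h0
      by_contra hne
      have := key hne
      linarith
    · intro he
      rw [he]
      exact hgb

/-- for `θ ≥ 3` and every `t ∈ (1/θ, 1)` one has
`R_1(t) ≥ 2((θ−1)/(θ−2))·log(θ−1)`, with equality iff `t = (θ−1)/θ`; in particular the
infimum of `R_1` on `(1/θ, 1)` equals `2((θ−1)/(θ−2))·log(θ−1)`. -/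
theorem stmt18 (θ : ℕ) (hθ : 3 ≤ θ) :
    (∀ t ∈ Set.Ioo (1 / (θ : ℝ)) 1,
      2 * (((θ : ℝ) - 1) / ((θ : ℝ) - 2)) * Real.log ((θ : ℝ) - 1) ≤ Rone θ t ∧
      (Rone θ t = 2 * (((θ : ℝ) - 1) / ((θ : ℝ) - 2)) * Real.log ((θ : ℝ) - 1) ↔
        t = ((θ : ℝ) - 1) / (θ : ℝ))) ∧
    sInf (Rone θ '' Set.Ioo (1 / (θ : ℝ)) 1)
      = 2 * (((θ : ℝ) - 1) / ((θ : ℝ) - 2)) * Real.log ((θ : ℝ) - 1) := by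
  have hT : (3:ℝ) ≤ (θ:ℝ) := by exact_mod_cast hθ
  have hT0 : (0:ℝ) < (θ:ℝ) := by linarith
  have hT1 : (0:ℝ) < (θ:ℝ) - 1 := by linarith
  have hT2 : (0:ℝ) < (θ:ℝ) - 2 := by linarith
  have hRe : ∀ t ∈ Set.Ioo (1/(θ:ℝ)) 1,
      Rone θ t - 2 * (((θ:ℝ)-1)/((θ:ℝ)-2)) * Real.log ((θ:ℝ)-1)
        = 2*((θ:ℝ)-1) * gFun (θ:ℝ) t / (((θ:ℝ)*t-1)^2) := by
    intro t ht
    have h1 : 1 < t*(θ:ℝ) := (div_lt_iff₀ hT0).mp ht.1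
    have hne : (θ:ℝ)*t - 1 ≠ 0 := by nlinarith
    unfold Rone gFun
    field_simp
  have hsq : ∀ t ∈ Set.Ioo (1/(θ:ℝ)) 1, (0:ℝ) < ((θ:ℝ)*t-1)^2 := by
    intro t ht
    have h1 : 1 < t*(θ:ℝ) := (div_lt_iff₀ hT0).mp ht.1
    have : (0:ℝ) < (θ:ℝ)*t - 1 := by nlinarith
    positivity
  have part1 : ∀ t ∈ Set.Ioo (1/(θ:ℝ)) 1,
      2 * (((θ:ℝ)-1)/((θ:ℝ)-2)) * Real.log ((θ:ℝ)-1) ≤ Rone θ t ∧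
      (Rone θ t = 2 * (((θ:ℝ)-1)/((θ:ℝ)-2)) * Real.log ((θ:ℝ)-1) ↔
        t = ((θ:ℝ)-1)/(θ:ℝ)) := by
    intro t ht
    obtain ⟨hge, hiff⟩ := master (θ:ℝ) hT ht.1 ht.2
    have heq := hRe t ht
    have hsq' := hsq t ht
    constructor
    · have h0 : 0 ≤ 2*((θ:ℝ)-1) * gFun (θ:ℝ) t / (((θ:ℝ)*t-1)^2) := by positivity
      linarith
    · constructor
      · intro hR
        have h3 : 2*((θ:ℝ)-1) * gFun (θ:ℝ) t / (((θ:ℝ)*t-1)^2) = 0 := by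
          rw [← heq, hR]; ring
        have hg0 : gFun (θ:ℝ) t = 0 := by
          rw [div_eq_zero_iff] at h3
          rcases h3 with h3 | h3
          · nlinarith
          · exact absurd h3 (ne_of_gt hsq')
        exact hiff.mp hg0
      · intro htb
        have hg0 : gFun (θ:ℝ) t = 0 := hiff.mpr htb
        rw [hg0] at heq
        simp at heq
        linarith
  refine ⟨part1, ?_⟩
  have hbmem : ((θ:ℝ)-1)/(θ:ℝ) ∈ Set.Ioo (1/(θ:ℝ)) 1 :=
    ⟨by rw [div_lt_div_iff₀ hT0 hT0]; nlinarith, by rw [div_lt_one hT0]; linarith⟩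
  have hcmem : 2 * (((θ:ℝ)-1)/((θ:ℝ)-2)) * Real.log ((θ:ℝ)-1)
      ∈ Rone θ '' Set.Ioo (1/(θ:ℝ)) 1 :=
    ⟨((θ:ℝ)-1)/(θ:ℝ), hbmem, (part1 _ hbmem).2.mpr rfl⟩
  have hlb : ∀ y ∈ Rone θ '' Set.Ioo (1/(θ:ℝ)) 1,
      2 * (((θ:ℝ)-1)/((θ:ℝ)-2)) * Real.log ((θ:ℝ)-1) ≤ y := by
    rintro y ⟨t, ht, rfl⟩
    exact (part1 t ht).1
  exact le_antisymm (csInf_le ⟨_, hlb⟩ hcmem) (le_csInf ⟨_, hcmem⟩ hlb)
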